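/- Let F be a finite field with q elements and let K be a field extension of F of degree d + 1. Consider the projective space ℙ(K^{d+1}) of lines in the K-vector space K^{d+1}, and let S be the set of points [v_0 : v_1 : ⋯ : v_d] ∈ ℙ(K^{d+1}) lying on no F-rational hyperplane, i.e. such that for every nonzero vector a = (a_0,…,a_d) ∈ F^{d+1} one has a_0 v_0 + a_1 v_1 + ⋯ + a_d v_d ≠ 0 (a condition independent of the choice of representative v). Then the cardinality of S satisfies |S| · (q^{d+1} − 1) = ∏_{i=0}^{d} (q^{d+1} − q^i); in other words, |S| equals the cardinality of GL_{d+1}(F) divided by q^{d+1} − 1. -/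
import Mathlib

section aux

variable {F K : Type*} [Field F] [Field K] [Algebra F K] {d : ℕ}

/-- The "no F-rational hyperplane" condition on a vector. -/
private def Cond (v : Fin (d + 1) → K) : Prop :=
  ∀ a : Fin (d + 1) → F, a ≠ 0 → (∑ i, algebraMap F K (a i) * v i) ≠ 0

private lemma cond_iff_li (v : Fin (d + 1) → K) :
    Cond (F := F) v ↔ LinearIndependent F v := by
  rw [Fintype.linearIndependent_iff]
  constructor
  · intro h a ha
    by_contra hne
    have hanz : a ≠ 0 := by
      intro h0; exact hne (by simp [h0])
    apply h a hanz
    simpa [Algebra.smul_def] using ha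
  · intro h a ha hsum
    apply ha
    funext i
    exact h a (by simpa [Algebra.smul_def] using hsum) i

private lemma cond_smul {v : Fin (d + 1) → K} (c : Kˣ) (hv : Cond (F := F) v) :
    Cond (F := F) (c • v) := by
  intro a ha
  have : ∑ i, algebraMap F K (a i) * (c • v) i
      = (c : K) * ∑ i, algebraMap F K (a i) * v i := by
    rw [Finset.mul_sum]
    refine Finset.sum_congr rfl fun i _ => ?_
    simp [Units.smul_def, smul_eq_mul, mul_left_comm]
  rw [this]
  exact mul_ne_zero c.ne_zero (hv a ha)

private lemma unit_smul_ne_zero {K V : Type*} [Field K] [AddCommGroup V] [Module K V]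
    (c : Kˣ) {v : V} (hv : v ≠ 0) : c • v ≠ 0 :=
  fun h => hv (by rw [← inv_smul_smul c v, h, smul_zero])

end aux

/-- Let `F` be a finite field with `q` elements and `K` a field extension of
`F` of degree `d + 1`.  Let `S` be the set of points of the projective space `ℙ(K^{d+1})`
lying on no `F`-rational hyperplane, i.e. points whose (any) representative `v` satisfies
`∑ i, a i • v i ≠ 0` for every nonzero `a ∈ F^{d+1}`.  Then
`|S| · (q^{d+1} − 1) = ∏_{i=0}^{d} (q^{d+1} − q^i) = |GL_{d+1}(F)|`. -/
theorem stmt10 {F K : Type*} [Field F] [Fintype F] [Field K] [Algebra F K]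
    {d : ℕ} (hdim : Module.finrank F K = d + 1) :
    Nat.card {v : Projectivization K (Fin (d + 1) → K) //
        ∀ a : Fin (d + 1) → F, a ≠ 0 →
          (∑ i, algebraMap F K (a i) * v.rep i) ≠ 0}
      * (Fintype.card F ^ (d + 1) - 1)
      = ∏ i ∈ Finset.range (d + 1),
          (Fintype.card F ^ (d + 1) - Fintype.card F ^ i) := by
  haveI : FiniteDimensional F K := FiniteDimensional.of_finrank_pos (by omega)
  haveI : Finite K := Module.finite_of_finite F
  haveI : Fintype K := Fintype.ofFinite K
  set q := Fintype.card F with hq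
  -- the set of points
  set S := {v : Projectivization K (Fin (d + 1) → K) //
      ∀ a : Fin (d + 1) → F, a ≠ 0 →
        (∑ i, algebraMap F K (a i) * v.rep i) ≠ 0} with hS
  -- bijection between S × Kˣ and linearly independent families
  have hbij : Nat.card S * Nat.card Kˣ
      = Nat.card {s : Fin (d + 1) → K // LinearIndependent F s} := by
    rw [← Nat.card_prod]
    apply Nat.card_congr
    refine Equiv.ofBijective (fun pc =>
      ⟨(pc.2 : Kˣ) • pc.1.1.rep, (cond_iff_li _).mp (cond_smul pc.2 pc.1.2)⟩) ⟨?_, ?_⟩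
    · rintro ⟨⟨p, hp⟩, c⟩ ⟨⟨p', hp'⟩, c'⟩ h
      have h' : c • p.rep = c' • p'.rep := congrArg Subtype.val h
      have hpp' : p = p' := by
        have h1 : Projectivization.mk K (c • p.rep)
            (unit_smul_ne_zero c p.rep_nonzero) = p := by
          conv_rhs => rw [← p.mk_rep]
          exact (Projectivization.mk_eq_mk_iff K _ _ _ p.rep_nonzero).mpr ⟨c, rfl⟩
        have h2 : Projectivization.mk K (c' • p'.rep)
            (unit_smul_ne_zero c' p'.rep_nonzero) = p' := by
          conv_rhs => rw [← p'.mk_rep]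
          exact (Projectivization.mk_eq_mk_iff K _ _ _ p'.rep_nonzero).mpr ⟨c', rfl⟩
        rw [← h1, ← h2]
        exact (Projectivization.mk_eq_mk_iff K _ _ _ _).mpr ⟨1, by simpa using h'.symm⟩
      subst hpp'
      obtain ⟨i, hi⟩ := Function.ne_iff.mp p.rep_nonzero
      have : (c : K) * p.rep i = (c' : K) * p.rep i := by
        have := congrFun h' i
        simpa [Units.smul_def, smul_eq_mul] using this
      have hcc' : (c : K) = (c' : K) := mul_right_cancel₀ hi this
      simp [Prod.ext_iff, Units.ext_iff, hcc']
    · rintro ⟨w, hw⟩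
      have hwne : w ≠ 0 := fun h0 => (hw.ne_zero 0) (by rw [h0]; rfl)
      obtain ⟨a, ha⟩ := Projectivization.exists_smul_eq_mk_rep K w hwne
      have hcond : ∀ b : Fin (d + 1) → F, b ≠ 0 →
          (∑ i, algebraMap F K (b i) * (Projectivization.mk K w hwne).rep i) ≠ 0 := by
        have := cond_smul (F := F) a ((cond_iff_li w).mpr hw)
        rw [ha] at this
        exact this
      refine ⟨⟨⟨Projectivization.mk K w hwne, hcond⟩, a⁻¹⟩, ?_⟩
      ext1
      show (a⁻¹ : Kˣ) • (Projectivization.mk K w hwne).rep = w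
      rw [← ha, inv_smul_smul]
  -- count linearly independent families
  have hcount : Nat.card {s : Fin (d + 1) → K // LinearIndependent F s}
      = ∏ i : Fin (d + 1), (q ^ (d + 1) - q ^ (i : ℕ)) := by
    have := card_linearIndependent (K := F) (V := K) (k := d + 1) (le_of_eq hdim.symm)
    rw [this, hdim]
  have hKcard : Fintype.card K = q ^ (d + 1) := by
    rw [Module.card_eq_pow_finrank (K := F) (V := K), hdim]
  have hunits : Nat.card Kˣ = q ^ (d + 1) - 1 := by
    rw [Nat.card_units, Nat.card_eq_fintype_card, hKcard]
  calc Nat.card S * (q ^ (d + 1) - 1) = Nat.card S * Nat.card Kˣ := by rw [hunits]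
    _ = ∏ i : Fin (d + 1), (q ^ (d + 1) - q ^ (i : ℕ)) := by rw [hbij, hcount]
    _ = ∏ i ∈ Finset.range (d + 1), (q ^ (d + 1) - q ^ i) := by
        exact Fin.prod_univ_eq_prod_range (fun i => q ^ (d + 1) - q ^ i) (d + 1)
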